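/- (The diminishing ratios of V_N in N) Let N ≥ 1 be an integer and x ∈ X₀, and assume the N-QP at x attains its infimum. Then V_{N+1}(x) − V_N(x) ≤ α_N·V_N(x), i.e., V_{N+1}(x) ≤ (1 + α_N)·V_N(x). -/

import Mathlib

open Matrix Finset Filter Topology

/-- The smallest eigenvalue of a (symmetric) real matrix. -/
noncomputable def lamMin {n : ℕ} (R : Matrix (Fin n) (Fin n) ℝ) : ℝ :=
  if h : R.IsHermitian then ⨅ i, h.eigenvalues i else 0

/-- The largest eigenvalue of a (symmetric) real matrix. -/
noncomputable def lamMax {n : ℕ} (R : Matrix (Fin n) (Fin n) ℝ) : ℝ :=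
  if h : R.IsHermitian then ⨆ i, h.eigenvalues i else 0

/-- The quadratic form `xᵀ R x`. -/
noncomputable def qf {p : ℕ} (R : Matrix (Fin p) (Fin p) ℝ) (x : Fin p → ℝ) : ℝ :=
  x ⬝ᵥ R.mulVec x

/-- λ := 1 − λ_min(Q̄)/λ_max(P̄). -/
noncomputable def lamParam {n : ℕ} (Qb Pb : Matrix (Fin n) (Fin n) ℝ) : ℝ :=
  1 - lamMin Qb / lamMax Pb

/-- φ_N := (λ_max(P̄)·λ_max(P + KᵀQK)/λ_min(P̄))·(1 − λ^{N+1})/(1 − λ). -/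
noncomputable def phi {n m : ℕ} (Qb Pb P : Matrix (Fin n) (Fin n) ℝ)
    (Q : Matrix (Fin m) (Fin m) ℝ) (K : Matrix (Fin m) (Fin n) ℝ) (N : ℕ) : ℝ :=
  (lamMax Pb * lamMax (P + Kᵀ * Q * K) / lamMin Pb) *
    ((1 - lamParam Qb Pb ^ (N + 1)) / (1 - lamParam Qb Pb))

/-- φ_∞ := λ_max(P̄)·λ_max(P + KᵀQK)/(λ_min(P̄)·(1 − λ)). -/
noncomputable def phiInf {n m : ℕ} (Qb Pb P : Matrix (Fin n) (Fin n) ℝ)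
    (Q : Matrix (Fin m) (Fin m) ℝ) (K : Matrix (Fin m) (Fin n) ℝ) : ℝ :=
  lamMax Pb * lamMax (P + Kᵀ * Q * K) / (lamMin Pb * (1 - lamParam Qb Pb))

/-- ψ := λ_max(KᵀQK + ĀᵀPĀ)/λ_min(P). -/
noncomputable def psiC {n m : ℕ} (P Abar : Matrix (Fin n) (Fin n) ℝ)
    (Q : Matrix (Fin m) (Fin m) ℝ) (K : Matrix (Fin m) (Fin n) ℝ) : ℝ :=
  lamMax (Kᵀ * Q * K + Abarᵀ * P * Abar) / lamMin P

/-- χ := 1 − λ_min(P)/φ_∞. -/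
noncomputable def chiC {n m : ℕ} (Qb Pb P : Matrix (Fin n) (Fin n) ℝ)
    (Q : Matrix (Fin m) (Fin m) ℝ) (K : Matrix (Fin m) (Fin n) ℝ) : ℝ :=
  1 - lamMin P / phiInf Qb Pb P Q K

/-- α_N := (λ_max(KᵀQK + ĀᵀPĀ)/λ_min(P))·∏_{κ=0}^{N−1}(1 − λ_min(P)/φ_{κ+1}). -/
noncomputable def alphaC {n m : ℕ} (Qb Pb P Abar : Matrix (Fin n) (Fin n) ℝ)
    (Q : Matrix (Fin m) (Fin m) ℝ) (K : Matrix (Fin m) (Fin n) ℝ) (N : ℕ) : ℝ :=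
  psiC P Abar Q K * ∏ κ ∈ Finset.range N, (1 - lamMin P / phi Qb Pb P Q K (κ + 1))

/-- γ_{N,S} := (1 − λ_min(P)/φ_∞)·max{1 + α_{N−S−1}, (1 + α_{N−1})·∏_{ℓ=N−S}^{N−1}(1 + α_ℓ)}. -/
noncomputable def gammaNS {n m : ℕ} (Qb Pb P Abar : Matrix (Fin n) (Fin n) ℝ)
    (Q : Matrix (Fin m) (Fin m) ℝ) (K : Matrix (Fin m) (Fin n) ℝ) (N S : ℕ) : ℝ :=
  (1 - lamMin P / phiInf Qb Pb P Q K) *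
    max (1 + alphaC Qb Pb P Abar Q K (N - S - 1))
      ((1 + alphaC Qb Pb P Abar Q K (N - 1)) *
        ∏ ℓ ∈ Finset.Ico (N - S) N, (1 + alphaC Qb Pb P Abar Q K ℓ))

/-- The trajectory of `x(τ+1) = A x(τ) + B u(τ)` from `x0` under the control sequence `u`. -/
def traj {n m : ℕ} (A : Matrix (Fin n) (Fin n) ℝ) (B : Matrix (Fin n) (Fin m) ℝ)
    (x0 : Fin n → ℝ) (u : ℕ → Fin m → ℝ) : ℕ → Fin n → ℝ
  | 0 => x0
  | τ + 1 => A *ᵥ traj A B x0 u τ + B *ᵥ u τ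

/-- Feasibility of a control sequence `u(0),…,u(N−1)` for the `N`-QP at `x`. -/
def Feasible {n m : ℕ} (A : Matrix (Fin n) (Fin n) ℝ) (B : Matrix (Fin n) (Fin m) ℝ)
    (X0 : Set (Fin n → ℝ)) (U : Set (Fin m → ℝ)) (N : ℕ) (x : Fin n → ℝ)
    (u : ℕ → Fin m → ℝ) : Prop :=
  (∀ τ < N, u τ ∈ U) ∧ (∀ τ < N, traj A B x u (τ + 1) ∈ X0)

/-- The cost `Σ_{τ=0}^{N−1}(x(τ)ᵀPx(τ) + u(τ)ᵀQu(τ)) + x(N)ᵀPx(N)` of the `N`-QP. -/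
noncomputable def cost {n m : ℕ} (A : Matrix (Fin n) (Fin n) ℝ) (B : Matrix (Fin n) (Fin m) ℝ)
    (P : Matrix (Fin n) (Fin n) ℝ) (Q : Matrix (Fin m) (Fin m) ℝ) (N : ℕ)
    (x : Fin n → ℝ) (u : ℕ → Fin m → ℝ) : ℝ :=
  (∑ τ ∈ Finset.range N, (qf P (traj A B x u τ) + qf Q (u τ))) + qf P (traj A B x u N)

/-- `V_N(x)`: the optimal value of the `N`-QP at `x`. -/
noncomputable def Vopt {n m : ℕ} (A : Matrix (Fin n) (Fin n) ℝ) (B : Matrix (Fin n) (Fin m) ℝ)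
    (P : Matrix (Fin n) (Fin n) ℝ) (Q : Matrix (Fin m) (Fin m) ℝ)
    (X0 : Set (Fin n → ℝ)) (U : Set (Fin m → ℝ)) (N : ℕ) (x : Fin n → ℝ) : ℝ :=
  sInf (cost A B P Q N x '' {u | Feasible A B X0 U N x u})

lemma diag_qf {p : ℕ} (d y : Fin p → ℝ) :
    y ⬝ᵥ (diagonal d) *ᵥ y = ∑ i, d i * y i ^ 2 := by
  simp only [dotProduct, mulVec_diagonal, pow_two]
  exact Finset.sum_congr rfl fun i _ => by ring

lemma qf_decomp {p : ℕ} {R : Matrix (Fin p) (Fin p) ℝ} (h : R.IsHermitian) (x : Fin p → ℝ) :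
    qf R x = ∑ i, h.eigenvalues i * ((h.eigenvectorUnitary : Matrix (Fin p) (Fin p) ℝ)ᵀ *ᵥ x) i ^ 2 ∧
    ((h.eigenvectorUnitary : Matrix (Fin p) (Fin p) ℝ)ᵀ *ᵥ x) ⬝ᵥ ((h.eigenvectorUnitary : Matrix (Fin p) (Fin p) ℝ)ᵀ *ᵥ x) = x ⬝ᵥ x := by
  set V : Matrix (Fin p) (Fin p) ℝ := (h.eigenvectorUnitary : Matrix (Fin p) (Fin p) ℝ) with hVdef
  have hV : V * Vᵀ = 1 := by
    have := (Matrix.mem_unitaryGroup_iff).mp h.eigenvectorUnitary.2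
    simpa [V, star_eq_conjTranspose, conjTranspose_eq_transpose_of_trivial] using this
  constructor
  · conv_lhs => rw [qf, h.spectral_theorem]
    simp only [Unitary.conjStarAlgAut_apply, Unitary.coe_star, star_eq_conjTranspose, conjTranspose_eq_transpose_of_trivial, ← hVdef]
    rw [← mulVec_mulVec, ← mulVec_mulVec, dotProduct_mulVec, ← mulVec_transpose, ← diag_qf]
    rfl
  · rw [dotProduct_mulVec, vecMul_transpose, mulVec_mulVec, hV, one_mulVec]

lemma dot_self_nonneg {p : ℕ} (x : Fin p → ℝ) : 0 ≤ x ⬝ᵥ x :=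
  Finset.sum_nonneg fun i _ => mul_self_nonneg _

lemma lamMin_dot_le_qf {p : ℕ} {R : Matrix (Fin p) (Fin p) ℝ} (h : R.IsHermitian)
    (x : Fin p → ℝ) : lamMin R * (x ⬝ᵥ x) ≤ qf R x := by
  obtain ⟨h1, h2⟩ := qf_decomp h x
  set y := ((h.eigenvectorUnitary : Matrix (Fin p) (Fin p) ℝ)ᵀ *ᵥ x) with hy
  have hyy : y ⬝ᵥ y = ∑ i, y i ^ 2 := by simp [dotProduct, pow_two]
  rw [h1, ← h2, hyy, lamMin, dif_pos h, Finset.mul_sum]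
  refine Finset.sum_le_sum fun i _ => ?_
  exact mul_le_mul_of_nonneg_right
    (ciInf_le (Set.Finite.bddBelow (Set.finite_range _)) i) (sq_nonneg _)

lemma qf_le_lamMax_dot {p : ℕ} {R : Matrix (Fin p) (Fin p) ℝ} (h : R.IsHermitian)
    (x : Fin p → ℝ) : qf R x ≤ lamMax R * (x ⬝ᵥ x) := by
  obtain ⟨h1, h2⟩ := qf_decomp h x
  set y := ((h.eigenvectorUnitary : Matrix (Fin p) (Fin p) ℝ)ᵀ *ᵥ x) with hy
  have hyy : y ⬝ᵥ y = ∑ i, y i ^ 2 := by simp [dotProduct, pow_two]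
  rw [h1, ← h2, hyy, lamMax, dif_pos h, Finset.mul_sum]
  refine Finset.sum_le_sum fun i _ => ?_
  exact mul_le_mul_of_nonneg_right
    (le_ciSup (Set.Finite.bddAbove (Set.finite_range _)) i) (sq_nonneg _)

lemma qf_nonneg {p : ℕ} {R : Matrix (Fin p) (Fin p) ℝ} (h : R.PosSemidef)
    (x : Fin p → ℝ) : 0 ≤ qf R x := by
  have := h.dotProduct_mulVec_nonneg x
  simpa [qf] using this

lemma lamMin_pos {p : ℕ} [NeZero p] {R : Matrix (Fin p) (Fin p) ℝ} (h : R.PosDef) :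
    0 < lamMin R := by
  rw [lamMin, dif_pos h.isHermitian]
  have : Nonempty (Fin p) := Fin.pos_iff_nonempty.mp (Nat.pos_of_ne_zero (NeZero.ne p))
  obtain ⟨i, hi⟩ := exists_eq_ciInf_of_finite (f := h.isHermitian.eigenvalues)
  rw [← hi]
  exact h.eigenvalues_pos i

lemma lamMax_pos {p : ℕ} [NeZero p] {R : Matrix (Fin p) (Fin p) ℝ} (h : R.PosDef) :
    0 < lamMax R := by
  rw [lamMax, dif_pos h.isHermitian]
  have : Nonempty (Fin p) := Fin.pos_iff_nonempty.mp (Nat.pos_of_ne_zero (NeZero.ne p))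
  obtain ⟨i⟩ := this
  exact lt_of_lt_of_le (h.eigenvalues_pos i) (le_ciSup (Set.Finite.bddAbove (Set.finite_range _)) i)

lemma lamMax_nonneg_of_psd {p : ℕ} {R : Matrix (Fin p) (Fin p) ℝ} (h : R.PosSemidef) :
    0 ≤ lamMax R := by
  rw [lamMax, dif_pos h.isHermitian]
  rcases Nat.eq_zero_or_pos p with hp | hp
  · subst hp; simp [iSup, Set.range_eq_empty, Real.sSup_empty]
  · have : Nonempty (Fin p) := Fin.pos_iff_nonempty.mp hp
    obtain ⟨i⟩ := this
    exact le_trans (h.eigenvalues_nonneg i) (le_ciSup (Set.Finite.bddAbove (Set.finite_range _)) i)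

section TrajLemmas
variable {n m : ℕ} (A : Matrix (Fin n) (Fin n) ℝ) (B : Matrix (Fin n) (Fin m) ℝ)

lemma traj_congr (x : Fin n → ℝ) (u u' : ℕ → Fin m → ℝ) (t : ℕ)
    (h : ∀ s < t, u s = u' s) : traj A B x u t = traj A B x u' t := by
  induction t with
  | zero => rfl
  | succ t ih =>
    simp only [traj, ih (fun s hs => h s (Nat.lt_succ_of_lt hs)), h t (Nat.lt_succ_self t)]

lemma traj_shift (x : Fin n → ℝ) (u : ℕ → Fin m → ℝ) (τ s : ℕ) :
    traj A B (traj A B x u τ) (fun s' => u (τ + s')) s = traj A B x u (τ + s) := by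
  induction s with
  | zero => rfl
  | succ s ih =>
    show A *ᵥ _ + B *ᵥ _ = _
    rw [ih]
    rfl

lemma cost_succ (P : Matrix (Fin n) (Fin n) ℝ) (Q : Matrix (Fin m) (Fin m) ℝ)
    (k : ℕ) (x : Fin n → ℝ) (u : ℕ → Fin m → ℝ) :
    cost A B P Q (k + 1) x u =
      (qf P x + qf Q (u 0)) +
        cost A B P Q k (A *ᵥ x + B *ᵥ u 0) (fun s => u (s + 1)) := by
  have htr : ∀ s : ℕ, traj A B x u (s + 1) = traj A B (A *ᵥ x + B *ᵥ u 0) (fun s' => u (s' + 1)) s := by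
    intro s
    induction s with
    | zero => rfl
    | succ s ih =>
      show A *ᵥ traj A B x u (s + 1) + B *ᵥ u (s + 1) = _
      rw [ih]
      rfl
  rw [cost, cost, Finset.sum_range_succ']
  simp only [htr]
  have h0 : traj A B x u 0 = x := rfl
  rw [h0]
  ring

lemma cost_nonneg (P : Matrix (Fin n) (Fin n) ℝ) (Q : Matrix (Fin m) (Fin m) ℝ)
    (hP : P.PosSemidef) (hQ : Q.PosSemidef) (k : ℕ) (x : Fin n → ℝ) (u : ℕ → Fin m → ℝ) :
    0 ≤ cost A B P Q k x u := by
  refine add_nonneg (Finset.sum_nonneg fun τ _ => add_nonneg (qf_nonneg hP _) (qf_nonneg hQ _))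
    (qf_nonneg hP _)

lemma terminal_le_cost (P : Matrix (Fin n) (Fin n) ℝ) (Q : Matrix (Fin m) (Fin m) ℝ)
    (hP : P.PosSemidef) (hQ : Q.PosSemidef) (k : ℕ) (x : Fin n → ℝ) (u : ℕ → Fin m → ℝ) :
    qf P (traj A B x u k) ≤ cost A B P Q k x u :=
  le_add_of_nonneg_left (Finset.sum_nonneg fun τ _ => add_nonneg (qf_nonneg hP _) (qf_nonneg hQ _))

lemma head_le_cost (P : Matrix (Fin n) (Fin n) ℝ) (Q : Matrix (Fin m) (Fin m) ℝ)
    (hP : P.PosSemidef) (hQ : Q.PosSemidef) (k : ℕ) (x : Fin n → ℝ) (u : ℕ → Fin m → ℝ) :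
    qf P x ≤ cost A B P Q k x u := by
  cases k with
  | zero => exact le_of_eq (by simp [cost, traj])
  | succ k =>
    rw [cost_succ]
    have := cost_nonneg A B P Q hP hQ k (A *ᵥ x + B *ᵥ u 0) (fun s => u (s + 1))
    have := qf_nonneg hQ (u 0)
    linarith

lemma bddBelow_costs (P : Matrix (Fin n) (Fin n) ℝ) (Q : Matrix (Fin m) (Fin m) ℝ)
    (hP : P.PosSemidef) (hQ : Q.PosSemidef) (X0 : Set (Fin n → ℝ)) (U : Set (Fin m → ℝ))
    (k : ℕ) (x : Fin n → ℝ) :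
    BddBelow (cost A B P Q k x '' {u | Feasible A B X0 U k x u}) := by
  refine ⟨0, fun v hv => ?_⟩
  obtain ⟨u, -, rfl⟩ := hv
  exact cost_nonneg A B P Q hP hQ k x u

end TrajLemmas

section QfAlg
variable {n m : ℕ}

lemma qf_conj (R : Matrix (Fin n) (Fin n) ℝ) (M : Matrix (Fin n) (Fin m) ℝ) (x : Fin m → ℝ) :
    qf (Mᵀ * R * M) x = qf R (M *ᵥ x) := by
  rw [qf, qf, ← mulVec_mulVec, ← mulVec_mulVec, dotProduct_mulVec, vecMul_transpose]

lemma qf_add (R S : Matrix (Fin n) (Fin n) ℝ) (x : Fin n → ℝ) :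
    qf (R + S) x = qf R x + qf S x := by
  rw [qf, qf, qf, add_mulVec, dotProduct_add]

lemma qf_sub (R S : Matrix (Fin n) (Fin n) ℝ) (x : Fin n → ℝ) :
    qf (R - S) x = qf R x - qf S x := by
  rw [qf, qf, qf, sub_mulVec, dotProduct_sub]

lemma psd_conj (R : Matrix (Fin n) (Fin n) ℝ) (hR : R.PosSemidef)
    (M : Matrix (Fin n) (Fin m) ℝ) : (Mᵀ * R * M).PosSemidef := by
  have := hR.conjTranspose_mul_mul_same M
  rwa [conjTranspose_eq_transpose_of_trivial] at this

end QfAlg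

section Lyap
variable {n m : ℕ} [NeZero n]
  {A : Matrix (Fin n) (Fin n) ℝ} {B : Matrix (Fin n) (Fin m) ℝ}
  {K : Matrix (Fin m) (Fin n) ℝ} {Qb Pb : Matrix (Fin n) (Fin n) ℝ}
  (hQb : Qb.PosDef) (hPb : Pb.PosDef)
  (hLyap : (A + B * K)ᵀ * Pb * (A + B * K) - Pb = -Qb)

include hQb hPb hLyap

lemma qf_Qb_le_Pb (z : Fin n → ℝ) : qf Qb z ≤ qf Pb z := by
  have h1 : (A + B * K)ᵀ * Pb * (A + B * K) = Pb - Qb := by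
    have := hLyap
    linear_combination (norm := module) this
  have h2 : 0 ≤ qf (Pb - Qb) z := by
    rw [← h1, qf_conj]
    exact qf_nonneg hPb.posSemidef _
  rw [qf_sub] at h2
  linarith

lemma lamParam_nonneg : 0 ≤ lamParam Qb Pb := by
  set z : Fin n → ℝ := Pi.single ⟨0, Nat.pos_of_ne_zero (NeZero.ne n)⟩ 1 with hz
  have hzz : z ⬝ᵥ z = 1 := by
    simp [hz, dotProduct, Pi.single_apply]
  have h1 : lamMin Qb * (z ⬝ᵥ z) ≤ qf Qb z := lamMin_dot_le_qf hQb.isHermitian z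
  have h2 : qf Pb z ≤ lamMax Pb * (z ⬝ᵥ z) := qf_le_lamMax_dot hPb.isHermitian z
  have h3 := qf_Qb_le_Pb hQb hPb hLyap z
  rw [hzz, mul_one] at h1 h2
  have h4 : lamMin Qb ≤ lamMax Pb := by linarith
  rw [lamParam, sub_nonneg]
  exact div_le_one_of_le₀ h4 (le_of_lt (lamMax_pos hPb))

lemma lamParam_lt_one : lamParam Qb Pb < 1 := by
  rw [lamParam, sub_lt_self_iff]
  exact div_pos (lamMin_pos hQb) (lamMax_pos hPb)

lemma qf_Pb_decay (z : Fin n → ℝ) :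
    qf Pb ((A + B * K) *ᵥ z) ≤ lamParam Qb Pb * qf Pb z := by
  have h1 : (A + B * K)ᵀ * Pb * (A + B * K) = Pb - Qb := by
    linear_combination (norm := module) hLyap
  have h2 : qf Pb ((A + B * K) *ᵥ z) = qf Pb z - qf Qb z := by
    rw [← qf_conj, h1, qf_sub]
  have hM := lamMax_pos hPb
  have h3 : lamMin Qb / lamMax Pb * qf Pb z ≤ qf Qb z := by
    have hq1 : qf Pb z ≤ lamMax Pb * (z ⬝ᵥ z) := qf_le_lamMax_dot hPb.isHermitian z
    have hq2 : lamMin Qb * (z ⬝ᵥ z) ≤ qf Qb z := lamMin_dot_le_qf hQb.isHermitian z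
    have hr : 0 ≤ lamMin Qb / lamMax Pb := le_of_lt (div_pos (lamMin_pos hQb) hM)
    calc lamMin Qb / lamMax Pb * qf Pb z ≤ lamMin Qb / lamMax Pb * (lamMax Pb * (z ⬝ᵥ z)) :=
          mul_le_mul_of_nonneg_left hq1 hr
      _ = lamMin Qb * (z ⬝ᵥ z) := by
          field_simp
      _ ≤ qf Qb z := hq2
  rw [h2, lamParam]
  ring_nf
  ring_nf at h3
  linarith

lemma qf_Pb_pow_decay (z : Fin n → ℝ) (τ : ℕ) :
    qf Pb ((A + B * K) ^ τ *ᵥ z) ≤ lamParam Qb Pb ^ τ * qf Pb z := by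
  induction τ with
  | zero => simp [pow_zero, one_mulVec]
  | succ τ ih =>
    have h1 : (A + B * K) ^ (τ + 1) *ᵥ z = (A + B * K) *ᵥ ((A + B * K) ^ τ *ᵥ z) := by
      rw [mulVec_mulVec, ← pow_succ']
    rw [h1]
    calc qf Pb ((A + B * K) *ᵥ ((A + B * K) ^ τ *ᵥ z))
        ≤ lamParam Qb Pb * qf Pb ((A + B * K) ^ τ *ᵥ z) := qf_Pb_decay hQb hPb hLyap _
      _ ≤ lamParam Qb Pb * (lamParam Qb Pb ^ τ * qf Pb z) :=
          mul_le_mul_of_nonneg_left ih (lamParam_nonneg hQb hPb hLyap)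
      _ = lamParam Qb Pb ^ (τ + 1) * qf Pb z := by ring

end Lyap

noncomputable def uK {n m : ℕ} (K : Matrix (Fin m) (Fin n) ℝ)
    (Ab : Matrix (Fin n) (Fin n) ℝ) (y : Fin n → ℝ) : ℕ → Fin m → ℝ :=
  fun τ => K *ᵥ (Ab ^ τ *ᵥ y)

lemma traj_uK {n m : ℕ} (A : Matrix (Fin n) (Fin n) ℝ) (B : Matrix (Fin n) (Fin m) ℝ)
    (K : Matrix (Fin m) (Fin n) ℝ) (y : Fin n → ℝ) (τ : ℕ) :
    traj A B y (uK K (A + B * K) y) τ = (A + B * K) ^ τ *ᵥ y := by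
  induction τ with
  | zero => simp [traj, pow_zero, one_mulVec]
  | succ τ ih =>
    show A *ᵥ traj A B y (uK K (A + B * K) y) τ + B *ᵥ (K *ᵥ ((A + B * K) ^ τ *ᵥ y)) = _
    rw [ih, pow_succ', ← mulVec_mulVec, add_mulVec, ← mulVec_mulVec]

section KFeas
variable {n m : ℕ} [NeZero n]
  {A : Matrix (Fin n) (Fin n) ℝ} {B : Matrix (Fin n) (Fin m) ℝ}
  {K : Matrix (Fin m) (Fin n) ℝ} {Qb Pb : Matrix (Fin n) (Fin n) ℝ}
  (hQb : Qb.PosDef) (hPb : Pb.PosDef)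
  (hLyap : (A + B * K)ᵀ * Pb * (A + B * K) - Pb = -Qb)
  {c : ℝ} (hc : 0 < c)
  {X0 : Set (Fin n → ℝ)} (hX0 : X0 = {x : Fin n → ℝ | qf Pb x ≤ c})
  {X : Set (Fin n → ℝ)} {U : Set (Fin m → ℝ)}
  (hX0X : X0 ⊆ X) (hKU : ∀ x ∈ X, K *ᵥ x ∈ U)
  {P : Matrix (Fin n) (Fin n) ℝ} {Q : Matrix (Fin m) (Fin m) ℝ}
  (hP : P.PosDef) (hQ : Q.PosDef)

include hQb hPb hLyap hc hX0 hX0X hKU hP hQ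

lemma state_in_X0 {y : Fin n → ℝ} (hy : y ∈ X0) (τ : ℕ) :
    (A + B * K) ^ τ *ᵥ y ∈ X0 := by
  rw [hX0] at hy ⊢
  have h1 := qf_Pb_pow_decay hQb hPb hLyap y τ
  have h2 : lamParam Qb Pb ^ τ ≤ 1 :=
    pow_le_one₀ (lamParam_nonneg hQb hPb hLyap) (le_of_lt (lamParam_lt_one hQb hPb hLyap))
  have h3 : 0 ≤ qf Pb y := qf_nonneg hPb.posSemidef y
  have h4 : lamParam Qb Pb ^ τ * qf Pb y ≤ qf Pb y := by
    nlinarith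
  exact le_trans (le_trans h1 h4) hy

lemma uK_feasible {y : Fin n → ℝ} (hy : y ∈ X0) (k : ℕ) :
    Feasible A B X0 U k y (uK K (A + B * K) y) := by
  constructor
  · intro τ _
    exact hKU _ (hX0X (state_in_X0 hQb hPb hLyap hc hX0 hX0X hKU hP hQ hy τ))
  · intro τ _
    rw [traj_uK]
    exact state_in_X0 hQb hPb hLyap hc hX0 hX0X hKU hP hQ hy _

lemma cost_uK_le {y : Fin n → ℝ} (hy : y ∈ X0) (k : ℕ) :
    cost A B P Q k y (uK K (A + B * K) y) ≤ phi Qb Pb P Q K k * (y ⬝ᵥ y) := by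
  have hPKQ : (P + Kᵀ * Q * K).PosSemidef := hP.posSemidef.add (psd_conj Q hQ.posSemidef K)
  set lam := lamParam Qb Pb with hlamdef
  set S := lamMax (P + Kᵀ * Q * K) with hSdef
  have hS : 0 ≤ S := lamMax_nonneg_of_psd hPKQ
  have hPbmin : 0 < lamMin Pb := lamMin_pos hPb
  have hyy : 0 ≤ y ⬝ᵥ y := dot_self_nonneg y
  have hlam0 : 0 ≤ lam := lamParam_nonneg hQb hPb hLyap
  have hlam1 : lam < 1 := lamParam_lt_one hQb hPb hLyap
  set C := lamMax Pb * S / lamMin Pb with hC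
  have hg : ∀ τ : ℕ, qf (P + Kᵀ * Q * K) ((A + B * K) ^ τ *ᵥ y) ≤ C * lam ^ τ * (y ⬝ᵥ y) := by
    intro τ
    set z := (A + B * K) ^ τ *ᵥ y with hzdef
    have h1 : qf (P + Kᵀ * Q * K) z ≤ S * (z ⬝ᵥ z) := qf_le_lamMax_dot hPKQ.isHermitian z
    have h2 : lamMin Pb * (z ⬝ᵥ z) ≤ qf Pb z := lamMin_dot_le_qf hPb.isHermitian z
    have h3 : qf Pb z ≤ lam ^ τ * qf Pb y := qf_Pb_pow_decay hQb hPb hLyap y τ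
    have h4 : qf Pb y ≤ lamMax Pb * (y ⬝ᵥ y) := qf_le_lamMax_dot hPb.isHermitian y
    have hzz : 0 ≤ z ⬝ᵥ z := dot_self_nonneg z
    have h5 : z ⬝ᵥ z ≤ lam ^ τ * lamMax Pb * (y ⬝ᵥ y) / lamMin Pb := by
      rw [le_div_iff₀ hPbmin]
      nlinarith [pow_nonneg hlam0 τ]
    calc qf (P + Kᵀ * Q * K) z ≤ S * (z ⬝ᵥ z) := h1
      _ ≤ S * (lam ^ τ * lamMax Pb * (y ⬝ᵥ y) / lamMin Pb) := mul_le_mul_of_nonneg_left h5 hS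
      _ = C * lam ^ τ * (y ⬝ᵥ y) := by rw [hC]; field_simp
  have hcost : cost A B P Q k y (uK K (A + B * K) y) ≤
      ∑ τ ∈ Finset.range (k + 1), C * lam ^ τ * (y ⬝ᵥ y) := by
    rw [cost, Finset.sum_range_succ]
    refine add_le_add (Finset.sum_le_sum fun τ _ => ?_) ?_
    · rw [traj_uK]
      have hu : qf Q (uK K (A + B * K) y τ) = qf (Kᵀ * Q * K) ((A + B * K) ^ τ *ᵥ y) := by
        rw [uK, qf_conj]
      rw [hu, ← qf_add]
      exact hg τ
    · rw [traj_uK]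
      have : qf P ((A + B * K) ^ k *ᵥ y) ≤ qf (P + Kᵀ * Q * K) ((A + B * K) ^ k *ᵥ y) := by
        rw [qf_add]
        have := qf_nonneg (psd_conj Q hQ.posSemidef K) ((A + B * K) ^ k *ᵥ y)
        linarith
      exact le_trans this (hg k)
  refine le_trans hcost (le_of_eq ?_)
  have hgeo : ∑ τ ∈ Finset.range (k + 1), lam ^ τ = (1 - lam ^ (k + 1)) / (1 - lam) := by
    rw [geom_sum_eq (ne_of_lt hlam1), ← neg_div_neg_eq]
    ring_nf
  calc ∑ τ ∈ Finset.range (k + 1), C * lam ^ τ * (y ⬝ᵥ y)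
      = C * (∑ τ ∈ Finset.range (k + 1), lam ^ τ) * (y ⬝ᵥ y) := by
        rw [Finset.mul_sum, Finset.sum_mul]
    _ = phi Qb Pb P Q K k * (y ⬝ᵥ y) := by rw [hgeo, phi, ← hlamdef, ← hSdef, ← hC]

lemma Vopt_le_phi {y : Fin n → ℝ} (hy : y ∈ X0) (k : ℕ) :
    Vopt A B P Q X0 U k y ≤ phi Qb Pb P Q K k * (y ⬝ᵥ y) :=
  le_trans
    (csInf_le (bddBelow_costs A B P Q hP.posSemidef hQ.posSemidef X0 U k y)
      ⟨uK K (A + B * K) y, uK_feasible hQb hPb hLyap hc hX0 hX0X hKU hP hQ hy k, rfl⟩)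
    (cost_uK_le hQb hPb hLyap hc hX0 hX0X hKU hP hQ hy k)

omit hQb hPb hLyap hc hX0 hX0X hKU hP hQ in
lemma qf_pos_of_ne {p : ℕ} {R : Matrix (Fin p) (Fin p) ℝ} (hR : R.PosDef) {z : Fin p → ℝ}
    (hz : z ≠ 0) : 0 < qf R z := by
  have := hR.dotProduct_mulVec_pos hz
  simpa [qf] using this

omit hQb hPb hLyap hc hX0 hX0X hKU hP hQ in
lemma qf_smul {p : ℕ} (R : Matrix (Fin p) (Fin p) ℝ) (t : ℝ) (z : Fin p → ℝ) :
    qf R (t • z) = t ^ 2 * qf R z := by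
  simp only [qf, mulVec_smul, smul_dotProduct, dotProduct_smul, smul_eq_mul]
  ring

lemma qf_head_le_Vopt {y : Fin n → ℝ} (hy : y ∈ X0) (k : ℕ) :
    qf P y ≤ Vopt A B P Q X0 U k y := by
  refine le_csInf ⟨_, ⟨uK K (A + B * K) y,
    uK_feasible hQb hPb hLyap hc hX0 hX0X hKU hP hQ hy k, rfl⟩⟩ ?_
  rintro v ⟨u, -, rfl⟩
  exact head_le_cost A B P Q hP.posSemidef hQ.posSemidef k y u

lemma lamMinP_le_phi (k : ℕ) : lamMin P ≤ phi Qb Pb P Q K k := by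
  set i0 : Fin n := ⟨0, Nat.pos_of_ne_zero (NeZero.ne n)⟩
  set e0 : Fin n → ℝ := Pi.single i0 1 with he0
  have he0ne : e0 ≠ 0 := by
    intro h
    have := congrFun h i0
    simp [he0] at this
  have hd : 0 < qf Pb e0 := qf_pos_of_ne hPb he0ne
  set d := qf Pb e0 with hdd
  set t := Real.sqrt (c / d) with ht
  have ht2 : t ^ 2 = c / d := Real.sq_sqrt (le_of_lt (div_pos hc hd))
  set y := t • e0 with hyd
  have hyX0 : y ∈ X0 := by
    rw [hX0]
    show qf Pb y ≤ c
    rw [hyd, qf_smul, ht2, ← hdd]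
    rw [div_mul_cancel₀ _ (ne_of_gt hd)]
  have hyy : y ⬝ᵥ y = c / d := by
    have : e0 ⬝ᵥ e0 = 1 := by simp [he0, dotProduct, Pi.single_apply]
    rw [hyd, smul_dotProduct, dotProduct_smul, this]
    simp [smul_eq_mul, ← ht2]
    ring
  have hyypos : 0 < y ⬝ᵥ y := by rw [hyy]; exact div_pos hc hd
  have chain : lamMin P * (y ⬝ᵥ y) ≤ phi Qb Pb P Q K k * (y ⬝ᵥ y) :=
    le_trans (lamMin_dot_le_qf hP.isHermitian y)
      (le_trans (qf_head_le_Vopt hQb hPb hLyap hc hX0 hX0X hKU hP hQ hyX0 k)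
        (Vopt_le_phi hQb hPb hLyap hc hX0 hX0X hKU hP hQ hyX0 k))
  exact le_of_mul_le_mul_right chain hyypos

lemma phi_pos (k : ℕ) : 0 < phi Qb Pb P Q K k :=
  lt_of_lt_of_le (lamMin_pos hP) (lamMinP_le_phi hQb hPb hLyap hc hX0 hX0X hKU hP hQ k)

end KFeas

lemma cost_split {n m : ℕ} (A : Matrix (Fin n) (Fin n) ℝ) (B : Matrix (Fin n) (Fin m) ℝ)
    (P : Matrix (Fin n) (Fin n) ℝ) (Q : Matrix (Fin m) (Fin m) ℝ)
    (τ k : ℕ) (x : Fin n → ℝ) (u : ℕ → Fin m → ℝ) :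
    cost A B P Q (τ + k) x u =
      (∑ s ∈ Finset.range τ, (qf P (traj A B x u s) + qf Q (u s))) +
        cost A B P Q k (traj A B x u τ) (fun s => u (τ + s)) := by
  rw [cost, cost, Finset.sum_range_add]
  simp only [traj_shift]
  ring

section Tail
variable {n m : ℕ} [NeZero n]
  {A : Matrix (Fin n) (Fin n) ℝ} {B : Matrix (Fin n) (Fin m) ℝ}
  {K : Matrix (Fin m) (Fin n) ℝ} {Qb Pb : Matrix (Fin n) (Fin n) ℝ}
  (hQb : Qb.PosDef) (hPb : Pb.PosDef)
  (hLyap : (A + B * K)ᵀ * Pb * (A + B * K) - Pb = -Qb)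
  {c : ℝ} (hc : 0 < c)
  {X0 : Set (Fin n → ℝ)} (hX0 : X0 = {x : Fin n → ℝ | qf Pb x ≤ c})
  {X : Set (Fin n → ℝ)} {U : Set (Fin m → ℝ)}
  (hX0X : X0 ⊆ X) (hKU : ∀ x ∈ X, K *ᵥ x ∈ U)
  {P : Matrix (Fin n) (Fin n) ℝ} {Q : Matrix (Fin m) (Fin m) ℝ}
  (hP : P.PosDef) (hQ : Q.PosDef)
  {N : ℕ} {x : Fin n → ℝ} (hx : x ∈ X0) {ustar : ℕ → Fin m → ℝ}
  (hfeas : Feasible A B X0 U N x ustar)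
  (hopt : cost A B P Q N x ustar = Vopt A B P Q X0 U N x)

include hQb hPb hLyap hc hX0 hX0X hKU hP hQ hx hfeas hopt

omit hQb hPb hLyap hc hX0 hX0X hKU hP hQ hopt in
lemma xs_in_X0 (τ : ℕ) (hτ : τ ≤ N) : traj A B x ustar τ ∈ X0 := by
  cases τ with
  | zero => exact hx
  | succ τ => exact hfeas.2 τ (Nat.lt_of_succ_le hτ)

omit hQb hPb hLyap hc hX0 hX0X hKU hP hQ hx hopt in
lemma tail_feasible (τ : ℕ) (hτ : τ ≤ N) :
    Feasible A B X0 U (N - τ) (traj A B x ustar τ) (fun s => ustar (τ + s)) := by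
  constructor
  · intro s hs
    exact hfeas.1 (τ + s) (by omega)
  · intro s hs
    rw [traj_shift]
    exact hfeas.2 (τ + s) (by omega)

lemma splice_le (τ : ℕ) (hτ : τ ≤ N) :
    cost A B P Q (N - τ) (traj A B x ustar τ) (fun s => ustar (τ + s)) ≤
      Vopt A B P Q X0 U (N - τ) (traj A B x ustar τ) := by
  set xτ := traj A B x ustar τ with hxτ
  by_contra hlt
  push_neg at hlt
  rw [Vopt] at hlt
  have hne : (cost A B P Q (N - τ) xτ '' {u | Feasible A B X0 U (N - τ) xτ u}).Nonempty :=
    ⟨_, ⟨_, tail_feasible hfeas τ hτ, rfl⟩⟩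
  obtain ⟨v, hv, hvlt⟩ := exists_lt_of_csInf_lt hne hlt
  obtain ⟨u'', hu''feas, rfl⟩ := hv
  set w : ℕ → Fin m → ℝ := fun s => if s < τ then ustar s else u'' (s - τ) with hw
  have htrw : ∀ s ≤ τ, traj A B x w s = traj A B x ustar s := by
    intro s hs
    exact traj_congr A B x w ustar s fun s' hs' => if_pos (by omega)
  have hshift_eq : (fun s => w (τ + s)) = u'' := by
    funext s
    simp only [hw, if_neg (show ¬ τ + s < τ by omega), Nat.add_sub_cancel_left]
  have htrw2 : ∀ s, traj A B x w (τ + s) = traj A B xτ u'' s := by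
    intro s
    rw [← traj_shift A B x w τ s, htrw τ le_rfl, ← hxτ, hshift_eq]
  have hwfeas : Feasible A B X0 U N x w := by
    constructor
    · intro s hs
      by_cases h : s < τ
      · rw [hw]; simp only [if_pos h]; exact hfeas.1 s hs
      · rw [hw]; simp only [if_neg h]
        exact hu''feas.1 (s - τ) (by omega)
    · intro s hs
      by_cases h : s + 1 ≤ τ
      · rw [htrw (s + 1) h]
        exact hfeas.2 s hs
      · have : s + 1 = τ + (s + 1 - τ) := by omega
        rw [this, htrw2]
        have h2 : s + 1 - τ = (s - τ) + 1 := by omega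
        rw [h2]
        exact hu''feas.2 (s - τ) (by omega)
  have hcostw : cost A B P Q N x w =
      (∑ s ∈ Finset.range τ, (qf P (traj A B x ustar s) + qf Q (ustar s))) +
        cost A B P Q (N - τ) xτ u'' := by
    have hN : N = τ + (N - τ) := by omega
    conv_lhs => rw [hN]
    rw [cost_split]
    congr 1
    · refine Finset.sum_congr rfl fun s hs => ?_
      rw [Finset.mem_range] at hs
      rw [htrw s (le_of_lt hs), hw]
      simp only [if_pos hs]
    · rw [htrw τ le_rfl, ← hxτ, hshift_eq]
  have hcoststar : cost A B P Q N x ustar =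
      (∑ s ∈ Finset.range τ, (qf P (traj A B x ustar s) + qf Q (ustar s))) +
        cost A B P Q (N - τ) xτ (fun s => ustar (τ + s)) := by
    have hN : N = τ + (N - τ) := by omega
    conv_lhs => rw [hN]
    rw [cost_split]
  have hVle : Vopt A B P Q X0 U N x ≤ cost A B P Q N x w :=
    csInf_le (bddBelow_costs A B P Q hP.posSemidef hQ.posSemidef X0 U N x) ⟨w, hwfeas, rfl⟩
  rw [hopt] at hcoststar
  rw [hcostw] at hVle
  linarith

lemma J_eq (τ : ℕ) (hτ : τ ≤ N) :
    cost A B P Q (N - τ) (traj A B x ustar τ) (fun s => ustar (τ + s)) =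
      Vopt A B P Q X0 U (N - τ) (traj A B x ustar τ) :=
  le_antisymm (splice_le hQb hPb hLyap hc hX0 hX0X hKU hP hQ hx hfeas hopt τ hτ)
    (csInf_le (bddBelow_costs A B P Q hP.posSemidef hQ.posSemidef X0 U _ _)
      ⟨_, tail_feasible hfeas τ hτ, rfl⟩)

lemma J_step (τ : ℕ) (hτ : τ < N) :
    cost A B P Q (N - (τ + 1)) (traj A B x ustar (τ + 1)) (fun s => ustar (τ + 1 + s)) ≤
      (1 - lamMin P / phi Qb Pb P Q K (N - τ)) *
        cost A B P Q (N - τ) (traj A B x ustar τ) (fun s => ustar (τ + s)) := by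
  set xτ := traj A B x ustar τ with hxτ
  set Jτ := cost A B P Q (N - τ) xτ (fun s => ustar (τ + s)) with hJτ
  set Jτ1 := cost A B P Q (N - (τ + 1)) (traj A B x ustar (τ + 1))
    (fun s => ustar (τ + 1 + s)) with hJτ1
  have hk : N - τ = (N - (τ + 1)) + 1 := by omega
  have hrec : Jτ = (qf P xτ + qf Q (ustar τ)) + Jτ1 := by
    rw [hJτ, hk, cost_succ]
    simp only [Nat.add_zero]
    have harg : (A *ᵥ xτ + B *ᵥ ustar τ) = traj A B x ustar (τ + 1) := rfl
    have hfun : (fun s => ustar (τ + (s + 1))) = (fun s => ustar (τ + 1 + s)) := by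
      funext s
      exact congrArg ustar (by omega)
    rw [harg, hfun, ← hJτ1]
  have hpk : 0 < phi Qb Pb P Q K (N - τ) :=
    phi_pos hQb hPb hLyap hc hX0 hX0X hKU hP hQ (N - τ)
  have hxτX0 : xτ ∈ X0 := xs_in_X0 hx hfeas τ (le_of_lt hτ)
  have hVeq : Jτ = Vopt A B P Q X0 U (N - τ) xτ :=
    J_eq hQb hPb hLyap hc hX0 hX0X hKU hP hQ hx hfeas hopt τ (le_of_lt hτ)
  have hVphi : Vopt A B P Q X0 U (N - τ) xτ ≤ phi Qb Pb P Q K (N - τ) * (xτ ⬝ᵥ xτ) :=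
    Vopt_le_phi hQb hPb hLyap hc hX0 hX0X hKU hP hQ hxτX0 (N - τ)
  have hqf : lamMin P * (xτ ⬝ᵥ xτ) ≤ qf P xτ := lamMin_dot_le_qf hP.isHermitian xτ
  have hPmin : 0 < lamMin P := lamMin_pos hP
  have hratio : lamMin P / phi Qb Pb P Q K (N - τ) * Jτ ≤ qf P xτ := by
    rw [hVeq]
    calc lamMin P / phi Qb Pb P Q K (N - τ) * Vopt A B P Q X0 U (N - τ) xτ
        ≤ lamMin P / phi Qb Pb P Q K (N - τ) * (phi Qb Pb P Q K (N - τ) * (xτ ⬝ᵥ xτ)) :=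
          mul_le_mul_of_nonneg_left hVphi (le_of_lt (div_pos hPmin hpk))
      _ = lamMin P * (xτ ⬝ᵥ xτ) := by
          field_simp
      _ ≤ qf P xτ := hqf
  have hQnn : 0 ≤ qf Q (ustar τ) := qf_nonneg hQ.posSemidef _
  have : Jτ1 = Jτ - qf P xτ - qf Q (ustar τ) := by linarith [hrec]
  rw [this]
  ring_nf
  ring_nf at hratio
  linarith

lemma J_prod (τ : ℕ) (hτ : τ ≤ N) :
    cost A B P Q (N - τ) (traj A B x ustar τ) (fun s => ustar (τ + s)) ≤
      (∏ s ∈ Finset.range τ, (1 - lamMin P / phi Qb Pb P Q K (N - s))) *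
        cost A B P Q N x (fun s => ustar s) := by
  induction τ with
  | zero =>
    simp only [Nat.sub_zero, Finset.range_zero, Finset.prod_empty, one_mul]
    have h1 : (fun s => ustar (0 + s)) = fun s => ustar s := by
      funext s
      rw [Nat.zero_add]
    rw [h1]
    exact le_of_eq rfl
  | succ τ ih =>
    have hτ' : τ < N := Nat.lt_of_succ_le hτ
    have h1 := J_step hQb hPb hLyap hc hX0 hX0X hKU hP hQ hx hfeas hopt τ hτ'
    have h2 := ih (le_of_lt hτ')
    have ha : 0 ≤ 1 - lamMin P / phi Qb Pb P Q K (N - τ) := by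
      rw [sub_nonneg]
      exact (div_le_one (phi_pos hQb hPb hLyap hc hX0 hX0X hKU hP hQ (N - τ))).mpr
        (lamMinP_le_phi hQb hPb hLyap hc hX0 hX0X hKU hP hQ (N - τ))
    calc cost A B P Q (N - (τ + 1)) (traj A B x ustar (τ + 1)) (fun s => ustar (τ + 1 + s))
        ≤ (1 - lamMin P / phi Qb Pb P Q K (N - τ)) *
            cost A B P Q (N - τ) (traj A B x ustar τ) (fun s => ustar (τ + s)) := h1
      _ ≤ (1 - lamMin P / phi Qb Pb P Q K (N - τ)) *
            ((∏ s ∈ Finset.range τ, (1 - lamMin P / phi Qb Pb P Q K (N - s))) *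
              cost A B P Q N x (fun s => ustar s)) := mul_le_mul_of_nonneg_left h2 ha
      _ = (∏ s ∈ Finset.range (τ + 1), (1 - lamMin P / phi Qb Pb P Q K (N - s))) *
            cost A B P Q N x (fun s => ustar s) := by
          rw [Finset.prod_range_succ]
          ring

lemma terminal_decay :
    qf P (traj A B x ustar N) ≤
      (∏ κ ∈ Finset.range N, (1 - lamMin P / phi Qb Pb P Q K (κ + 1))) *
        Vopt A B P Q X0 U N x := by
  have h1 := J_prod hQb hPb hLyap hc hX0 hX0X hKU hP hQ hx hfeas hopt N le_rfl
  have hJN : cost A B P Q (N - N) (traj A B x ustar N) (fun s => ustar (N + s)) =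
      qf P (traj A B x ustar N) := by
    rw [Nat.sub_self, cost]
    simp [traj]
  have hcost : cost A B P Q N x (fun s => ustar s) = Vopt A B P Q X0 U N x := hopt
  rw [hJN, hcost] at h1
  have hprod : ∏ s ∈ Finset.range N, (1 - lamMin P / phi Qb Pb P Q K (N - s)) =
      ∏ κ ∈ Finset.range N, (1 - lamMin P / phi Qb Pb P Q K (κ + 1)) := by
    rw [← Finset.prod_range_reflect (fun j => 1 - lamMin P / phi Qb Pb P Q K (j + 1)) N]
    refine Finset.prod_congr rfl fun s hs => ?_
    rw [Finset.mem_range] at hs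
    have : N - 1 - s + 1 = N - s := by omega
    rw [this]
  rw [← hprod]
  exact h1

end Tail

/-- The diminishing ratios of V_N in N: if the `N`-QP at `x ∈ X₀` (`N ≥ 1`)
attains its infimum, then `V_{N+1}(x) − V_N(x) ≤ α_N·V_N(x)`, i.e.
`V_{N+1}(x) ≤ (1 + α_N)·V_N(x)`. -/
theorem stmt9 {n m : ℕ}
    (A : Matrix (Fin n) (Fin n) ℝ) (B : Matrix (Fin n) (Fin m) ℝ)
    (K : Matrix (Fin m) (Fin n) ℝ) (Qb Pb : Matrix (Fin n) (Fin n) ℝ)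
    (hQb : Qb.PosDef) (hPb : Pb.PosDef)
    (hLyap : (A + B * K)ᵀ * Pb * (A + B * K) - Pb = -Qb)
    (c : ℝ) (hc : 0 < c)
    (X0 : Set (Fin n → ℝ)) (hX0 : X0 = {x : Fin n → ℝ | qf Pb x ≤ c})
    (X : Set (Fin n → ℝ)) (U : Set (Fin m → ℝ))
    (hX : Convex ℝ X) (hU : Convex ℝ U)
    (h0X : (0 : Fin n → ℝ) ∈ X) (h0U : (0 : Fin m → ℝ) ∈ U)
    (hX0X : X0 ⊆ X) (hKU : ∀ x ∈ X, K *ᵥ x ∈ U)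
    (P : Matrix (Fin n) (Fin n) ℝ) (Q : Matrix (Fin m) (Fin m) ℝ)
    (hP : P.PosDef) (hQ : Q.PosDef)
    (N : ℕ) (hN : 1 ≤ N) (x : Fin n → ℝ) (hx : x ∈ X0)
    (hattain : ∃ u : ℕ → Fin m → ℝ,
      Feasible A B X0 U N x u ∧ cost A B P Q N x u = Vopt A B P Q X0 U N x) :
    Vopt A B P Q X0 U (N + 1) x - Vopt A B P Q X0 U N x
        ≤ alphaC Qb Pb P (A + B * K) Q K N * Vopt A B P Q X0 U N x ∧
      Vopt A B P Q X0 U (N + 1) x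
        ≤ (1 + alphaC Qb Pb P (A + B * K) Q K N) * Vopt A B P Q X0 U N x := by
  obtain ⟨ustar, hfeas, hopt⟩ := hattain
  rcases Nat.eq_zero_or_pos n with hn | hn
  · -- degenerate case n = 0 : all costs areterminal  costs, Vopt = 0
    subst hn
    have hqfP : ∀ z : Fin 0 → ℝ, qf P z = 0 := fun z => by
      simp [qf, dotProduct]
    have hqfPb : ∀ z : Fin 0 → ℝ, qf Pb z = 0 := fun z => by
      simp [qf, dotProduct]
    have hfeas0 : ∀ k : ℕ, Feasible A B X0 U k x (fun _ => 0) := by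
      intro k
      constructor
      · intro τ _; exact h0U
      · intro τ _
        rw [hX0]
        show qf Pb _ ≤ c
        rw [hqfPb]
        exact le_of_lt hc
    have hcost0 : ∀ k : ℕ, cost A B P Q k x (fun _ => 0) = 0 := by
      intro k
      rw [cost]
      simp [hqfP, qf, zero_dotProduct]
    have hVk : ∀ k : ℕ, Vopt A B P Q X0 U k x = 0 := by
      intro k
      refine le_antisymm ?_ ?_
      · have := csInf_le (bddBelow_costs A B P Q hP.posSemidef hQ.posSemidef X0 U k x)
          ⟨(fun _ => 0), hfeas0 k, rfl⟩
        rwa [hcost0 k] at this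
      · refine le_csInf ⟨_, ⟨(fun _ => 0), hfeas0 k, rfl⟩⟩ ?_
        rintro v ⟨u, -, rfl⟩
        exact cost_nonneg A B P Q hP.posSemidef hQ.posSemidef k x u
    rw [hVk N, hVk (N + 1)]
    norm_num
  · haveI : NeZero n := ⟨hn.ne'⟩
    set xN := traj A B x ustar N with hxNdef
    have hxN : xN ∈ X0 := xs_in_X0 hx hfeas N le_rfl
    set uext : ℕ → Fin m → ℝ := fun s => if s < N then ustar s else K *ᵥ xN with hue
    have htre : ∀ s ≤ N, traj A B x uext s = traj A B x ustar s := fun s hs =>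
      traj_congr A B x uext ustar s fun s' hs' => if_pos (by omega)
    have htrN1 : traj A B x uext (N + 1) = (A + B * K) *ᵥ xN := by
      show A *ᵥ traj A B x uext N + B *ᵥ uext N = _
      rw [htre N le_rfl, ← hxNdef, hue]
      simp only [lt_irrefl N, if_false]
      rw [add_mulVec, mulVec_mulVec]
    have hAbxN : (A + B * K) *ᵥ xN ∈ X0 := by
      have := state_in_X0 hQb hPb hLyap hc hX0 hX0X hKU hP hQ hxN 1
      rwa [pow_one] at this
    have hfeasext : Feasible A B X0 U (N + 1) x uext := by
      constructor
      · intro τ hτ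
        by_cases h : τ < N
        · rw [hue]; simp only [if_pos h]; exact hfeas.1 τ h
        · rw [hue]; simp only [if_neg h]
          exact hKU _ (hX0X hxN)
      · intro τ hτ
        by_cases h : τ < N
        · rw [htre (τ + 1) (by omega)]
          exact hfeas.2 τ h
        · have hτN : τ = N := by omega
          rw [hτN, htrN1]
          exact hAbxN
    have hcostext : cost A B P Q (N + 1) x uext =
        cost A B P Q N x ustar + (qf Q (K *ᵥ xN) + qf P ((A + B * K) *ᵥ xN)) := by
      rw [cost, cost, Finset.sum_range_succ, htrN1]
      have hstages : ∀ s ∈ Finset.range N,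
          qf P (traj A B x uext s) + qf Q (uext s) =
            qf P (traj A B x ustar s) + qf Q (ustar s) := by
        intro s hs
        rw [Finset.mem_range] at hs
        rw [htre s (le_of_lt hs), hue]
        simp only [if_pos hs]
      rw [Finset.sum_congr rfl hstages, htre N le_rfl]
      have huN : uext N = K *ᵥ xN := by rw [hue]; simp
      rw [huN, ← hxNdef]
      ring
    have hMpsd : (Kᵀ * Q * K + (A + B * K)ᵀ * P * (A + B * K)).PosSemidef :=
      (psd_conj Q hQ.posSemidef K).add (psd_conj P hP.posSemidef (A + B * K))
    have hPmin : 0 < lamMin P := lamMin_pos hP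
    have hpsi : qf Q (K *ᵥ xN) + qf P ((A + B * K) *ᵥ xN) ≤
        psiC P (A + B * K) Q K * qf P xN := by
      have e1 : qf Q (K *ᵥ xN) + qf P ((A + B * K) *ᵥ xN) =
          qf (Kᵀ * Q * K + (A + B * K)ᵀ * P * (A + B * K)) xN := by
        rw [qf_add, qf_conj, qf_conj]
      have e2 : qf (Kᵀ * Q * K + (A + B * K)ᵀ * P * (A + B * K)) xN ≤
          lamMax (Kᵀ * Q * K + (A + B * K)ᵀ * P * (A + B * K)) * (xN ⬝ᵥ xN) :=
        qf_le_lamMax_dot hMpsd.isHermitian xN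
      have e3 : lamMin P * (xN ⬝ᵥ xN) ≤ qf P xN := lamMin_dot_le_qf hP.isHermitian xN
      have e4 : 0 ≤ lamMax (Kᵀ * Q * K + (A + B * K)ᵀ * P * (A + B * K)) :=
        lamMax_nonneg_of_psd hMpsd
      rw [e1, psiC]
      rw [div_mul_eq_mul_div, le_div_iff₀ hPmin] at *
      calc qf (Kᵀ * Q * K + (A + B * K)ᵀ * P * (A + B * K)) xN * lamMin P
          ≤ (lamMax (Kᵀ * Q * K + (A + B * K)ᵀ * P * (A + B * K)) * (xN ⬝ᵥ xN)) * lamMin P := by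
            nlinarith
        _ ≤ lamMax (Kᵀ * Q * K + (A + B * K)ᵀ * P * (A + B * K)) * qf P xN := by
            nlinarith
    have hterm := terminal_decay hQb hPb hLyap hc hX0 hX0X hKU hP hQ hx hfeas hopt
    have hVle : Vopt A B P Q X0 U (N + 1) x ≤ cost A B P Q (N + 1) x uext :=
      csInf_le (bddBelow_costs A B P Q hP.posSemidef hQ.posSemidef X0 U (N + 1) x)
        ⟨uext, hfeasext, rfl⟩
    have hpsinn : 0 ≤ psiC P (A + B * K) Q K :=
      div_nonneg (lamMax_nonneg_of_psd hMpsd) (le_of_lt hPmin)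
    have hkey : Vopt A B P Q X0 U (N + 1) x ≤
        Vopt A B P Q X0 U N x + alphaC Qb Pb P (A + B * K) Q K N * Vopt A B P Q X0 U N x := by
      have h1 : psiC P (A + B * K) Q K * qf P xN ≤
          psiC P (A + B * K) Q K *
            ((∏ κ ∈ Finset.range N, (1 - lamMin P / phi Qb Pb P Q K (κ + 1))) *
              Vopt A B P Q X0 U N x) := mul_le_mul_of_nonneg_left hterm hpsinn
      have h2 : alphaC Qb Pb P (A + B * K) Q K N * Vopt A B P Q X0 U N x =
          psiC P (A + B * K) Q K *
            ((∏ κ ∈ Finset.range N, (1 - lamMin P / phi Qb Pb P Q K (κ + 1))) *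
              Vopt A B P Q X0 U N x) := by
        rw [alphaC]; ring
      rw [h2]
      calc Vopt A B P Q X0 U (N + 1) x ≤ cost A B P Q (N + 1) x uext := hVle
        _ = cost A B P Q N x ustar + (qf Q (K *ᵥ xN) + qf P ((A + B * K) *ᵥ xN)) := hcostext
        _ ≤ Vopt A B P Q X0 U N x + psiC P (A + B * K) Q K * qf P xN := by
            rw [hopt]; linarith
        _ ≤ _ := by linarith
    exact ⟨by linarith, by linarith⟩
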